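/- Let p be prime and 1 ≤ n ≤ p. If x₁,…,xₙ are distinct elements of ℤ/pℤ and ξ₁,…,ξₙ are distinct elements of ℤ/pℤ, then the n×n matrix with entries exp(2πi xⱼ ξₖ / p) has nonzero determinant. -/

import Mathlib

open Complex

namespace ChebotarevAux

open MvPolynomial

variable {n : ℕ}

lemma prod_primes_dvd'' {R : Type*} [CommRing R] [IsDomain R] {ι : Type*} [DecidableEq ι]
    (s : Finset ι) (f : ι → R) :
    ∀ (D : R), (∀ i ∈ s, Prime (f i)) → (∀ i ∈ s, f i ∣ D) →
    (∀ i ∈ s, ∀ j ∈ s, i ≠ j → ¬ f i ∣ f j) → (∏ i ∈ s, f i) ∣ D := by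
  induction s using Finset.induction_on with
  | empty => intro D _ _ _; simp
  | insert a s ha ih =>
    intro D hp hd hnd
    rw [Finset.prod_insert ha]
    obtain ⟨b, rfl⟩ := hd a (Finset.mem_insert_self a s)
    refine mul_dvd_mul_left _ (ih b (fun i hi => hp i (Finset.mem_insert_of_mem hi)) ?_
      (fun i hi j hj hij => hnd i (Finset.mem_insert_of_mem hi) j
        (Finset.mem_insert_of_mem hj) hij))
    intro i hi
    have hia : i ≠ a := fun h => ha (h ▸ hi)
    have hdvd : f i ∣ f a * b := hd i (Finset.mem_insert_of_mem hi)
    rcases (hp i (Finset.mem_insert_of_mem hi)).dvd_or_dvd hdvd with h | h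
    · exact absurd h (hnd i (Finset.mem_insert_of_mem hi) a (Finset.mem_insert_self a s) hia)
    · exact h

noncomputable def subst (i j : Fin n) : MvPolynomial (Fin n) ℤ →ₐ[ℤ] MvPolynomial (Fin n) ℤ :=
  aeval (fun k => if k = i then X j else X k)

lemma subst_X_self (i j : Fin n) : subst i j (X i) = X j := by simp [subst]

lemma subst_X_ne (i j k : Fin n) (h : k ≠ i) : subst i j (X k) = X k := by simp [subst, h]

lemma dvd_sub_subst (i j : Fin n) (P : MvPolynomial (Fin n) ℤ) :
    (X i - X j) ∣ (P - subst i j P) := by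
  induction P using MvPolynomial.induction_on with
  | C a => simp [subst]
  | add p q hp hq =>
    have : p + q - subst i j (p + q) = (p - subst i j p) + (q - subst i j q) := by
      rw [map_add]; ring
    rw [this]; exact dvd_add hp hq
  | mul_X p k hp =>
    have : p * X k - subst i j (p * X k)
        = (p - subst i j p) * X k + subst i j p * (X k - subst i j (X k)) := by
      rw [map_mul]; ring
    rw [this]
    refine dvd_add (Dvd.dvd.mul_right hp _) (Dvd.dvd.mul_left ?_ _)
    by_cases hk : k = i
    · subst hk; rw [subst_X_self]
    · rw [subst_X_ne i j k hk, sub_self]; exact dvd_zero _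

lemma subst_sub_self (i j : Fin n) (hij : i ≠ j) : subst i j (X i - X j) = 0 := by
  rw [map_sub, subst_X_self, subst_X_ne i j j (Ne.symm hij), sub_self]

lemma dvd_of_subst_eq_zero (i j : Fin n) {P : MvPolynomial (Fin n) ℤ}
    (h : subst i j P = 0) : (X i - X j) ∣ P := by
  have := dvd_sub_subst i j P
  rwa [h, sub_zero] at this

lemma prime_X_sub (i j : Fin n) (hij : i ≠ j) : Prime (X i - X j : MvPolynomial (Fin n) ℤ) := by
  refine ⟨?_, ?_, ?_⟩
  · intro h0
    have := congrArg (MvPolynomial.eval (fun k : Fin n => if k = i then (1:ℤ) else 0)) h0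
    simp [Ne.symm hij] at this
  · intro hu
    have h2 := hu.map (subst i j)
    rw [subst_sub_self i j hij] at h2
    exact not_isUnit_zero h2
  · intro a b hab
    obtain ⟨c, hc⟩ := hab
    have h2 : subst i j a * subst i j b = 0 := by
      have := congrArg (subst i j) hc
      rw [map_mul, map_mul, subst_sub_self i j hij, zero_mul] at this
      exact this
    rcases mul_eq_zero.mp h2 with h | h
    · exact Or.inl (dvd_of_subst_eq_zero i j h)
    · exact Or.inr (dvd_of_subst_eq_zero i j h)

lemma not_dvd_pair {i j k l : Fin n} (hij : i < j) (hkl : k < l) (hne : (i, j) ≠ (k, l)) :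
    ¬ (X i - X j : MvPolynomial (Fin n) ℤ) ∣ (X k - X l) := by
  intro hdvd
  obtain ⟨v, hvij, hvkl⟩ : ∃ v : Fin n → ℤ, v i = v j ∧ v k ≠ v l := by
    by_cases h1 : i ≠ k ∧ j ≠ k
    · refine ⟨fun m => if m = k then 0 else 1, ?_, ?_⟩
      · simp only []; rw [if_neg h1.1, if_neg h1.2]
      · simp [hkl.ne']
    · by_cases h2 : i ≠ l ∧ j ≠ l
      · refine ⟨fun m => if m = l then 0 else 1, ?_, ?_⟩
        · simp only []; rw [if_neg h2.1, if_neg h2.2]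
        · simp [hkl.ne]
      · exfalso
        rw [not_and_or, not_ne_iff, not_ne_iff] at h1 h2
        rcases h1 with h1 | h1 <;> rcases h2 with h2 | h2
        · subst h1; subst h2; exact lt_irrefl _ hkl
        · exact hne (by rw [h1, h2])
        · subst h1; subst h2; exact lt_irrefl _ (hij.trans hkl)
        · subst h1; subst h2; exact lt_irrefl _ hkl
  obtain ⟨c, hc⟩ := hdvd
  have heq := congrArg (MvPolynomial.eval v) hc
  simp [hvij] at heq
  exact hvkl (sub_eq_zero.mp heq)

lemma coeff_prod_add_pow (c μ : Fin n → ℕ) :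
    MvPolynomial.coeff (Finsupp.equivFunOnFinite.symm μ)
      (∏ j : Fin n, (X j + 1 : MvPolynomial (Fin n) ℤ) ^ (c j)) =
    ∏ j : Fin n, (Nat.choose (c j) (μ j) : ℤ) := by
  have hfac : ∀ j : Fin n, (X j + 1 : MvPolynomial (Fin n) ℤ) ^ (c j)
      = ∑ m ∈ Finset.range (c j + 1), C ((c j).choose m : ℤ) * (X j) ^ m := by
    intro j
    rw [add_pow]
    refine Finset.sum_congr rfl fun m hm => ?_
    rw [one_pow, mul_one, MvPolynomial.C_eq_coe_nat, mul_comm]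
  simp_rw [hfac]
  rw [Finset.prod_univ_sum]
  rw [MvPolynomial.coeff_sum]
  have hterm : ∀ g : Fin n → ℕ,
      MvPolynomial.coeff (Finsupp.equivFunOnFinite.symm μ)
        (∏ j : Fin n, C ((c j).choose (g j) : ℤ) * X j ^ (g j))
      = (∏ j : Fin n, ((c j).choose (g j) : ℤ)) * (if g = μ then 1 else 0) := by
    intro g
    rw [Finset.prod_mul_distrib, ← map_prod]
    rw [MvPolynomial.coeff_C_mul]
    congr 1
    have hmono : (∏ j : Fin n, (X j : MvPolynomial (Fin n) ℤ) ^ (g j))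
        = monomial (Finsupp.equivFunOnFinite.symm g) 1 := by
      rw [MvPolynomial.monomial_eq, map_one, one_mul]
      rw [Finsupp.prod_fintype]
      · rfl
      · intro i; exact pow_zero _
    rw [hmono, MvPolynomial.coeff_monomial]
    by_cases h : g = μ
    · subst h; simp
    · rw [if_neg h, if_neg (by
        intro hEq
        exact h (Finsupp.equivFunOnFinite.symm.injective hEq))]
  rw [Finset.sum_congr rfl fun g _ => hterm g]
  simp only [mul_ite, mul_one, mul_zero]
  rw [Finset.sum_ite_eq' (Fintype.piFinset fun j => Finset.range (c j + 1)) μ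
    (fun g => ∏ j, ((c j).choose (g j) : ℤ))]
  by_cases hμ : μ ∈ Fintype.piFinset (fun j => Finset.range (c j + 1))
  · rw [if_pos hμ]
  · rw [if_neg hμ]
    symm
    obtain ⟨j, hj⟩ : ∃ j, ¬ μ j ∈ Finset.range (c j + 1) := by
      simpa [Fintype.mem_piFinset] using hμ
    refine Finset.prod_eq_zero (Finset.mem_univ j) ?_
    have hlt : c j < μ j := by simpa using hj
    rw [Nat.choose_eq_zero_of_lt hlt, Nat.cast_zero]

lemma coeff_det_shift (a μ : Fin n → ℕ) :
    MvPolynomial.coeff (Finsupp.equivFunOnFinite.symm μ)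
      (Matrix.det (Matrix.of fun j k : Fin n => (X j + 1 : MvPolynomial (Fin n) ℤ) ^ (a k))) =
    Matrix.det (Matrix.of fun j k : Fin n => (Nat.choose (a k) (μ j) : ℤ)) := by
  rw [Matrix.det_apply, Matrix.det_apply, MvPolynomial.coeff_sum]
  refine Finset.sum_congr rfl fun σ _ => ?_
  rw [MvPolynomial.coeff_smul]
  congr 1
  have h1 : (∏ i : Fin n, (Matrix.of fun j k : Fin n =>
        (X j + 1 : MvPolynomial (Fin n) ℤ) ^ (a k)) (σ i) i)
      = ∏ i : Fin n, (X i + 1 : MvPolynomial (Fin n) ℤ) ^ (a (σ.symm i)) := by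
    rw [← Equiv.prod_comp σ (fun i => (X i + 1 : MvPolynomial (Fin n) ℤ) ^ (a (σ.symm i)))]
    refine Finset.prod_congr rfl fun i _ => ?_
    rw [Matrix.of_apply, Equiv.symm_apply_apply]
  rw [h1, coeff_prod_add_pow]
  rw [← Equiv.prod_comp σ (fun i => ((a (σ.symm i)).choose (μ i) : ℤ))]
  refine Finset.prod_congr rfl fun i _ => ?_
  rw [Equiv.symm_apply_apply, Matrix.of_apply]

lemma det_choose_not_dvd (p : ℕ) (hp : p.Prime) (ξ : Fin n → ZMod p)
    (hξ : Function.Injective ξ) :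
    ¬ (p : ℤ) ∣ Matrix.det (Matrix.of fun j k : Fin n =>
        (Nat.choose ((ξ k).val) (j.val) : ℤ)) := by
  haveI : Fact p.Prime := ⟨hp⟩
  haveI : NeZero p := ⟨hp.pos.ne'⟩
  set v : Fin n → ℕ := fun i => (ξ i).val with hv
  have hdesc : (Matrix.of (fun i j : Fin n => (descPochhammer ℤ (j : ℕ)).eval (v i : ℤ))).det =
      (∏ i : Fin n, ((Nat.factorial i : ℕ) : ℤ)) *
        (Matrix.of (fun i j : Fin n => (Nat.choose (v i) (j : ℕ) : ℤ))).det := by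
    rw [← Nat.cast_prod]
    convert Matrix.det_mul_row (fun (i : Fin n) => ((Nat.factorial (i : ℕ)) : ℤ)) _
    · rw [Matrix.of_apply, descPochhammer_eval_eq_descFactorial ℤ _ _]
      congr 1
      exact Nat.descFactorial_eq_factorial_mul_choose _ _
    · rw [Nat.cast_prod]
  have hvand : (Matrix.vandermonde (fun i : Fin n => (v i : ℤ))).det =
      (Matrix.of (fun i j : Fin n => (descPochhammer ℤ (j : ℕ)).eval (v i : ℤ))).det :=
    Matrix.det_eval_matrixOfPolynomials_eq_det_vandermonde _ _
      (fun i => descPochhammer_natDegree ℤ i) (fun i => monic_descPochhammer ℤ i)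
  intro hdvd
  have htrans : (Matrix.of fun j k : Fin n => (Nat.choose ((ξ k).val) (j.val) : ℤ)) =
      Matrix.transpose (Matrix.of (fun i j : Fin n => (Nat.choose (v i) (j : ℕ) : ℤ))) := by
    ext i j; simp [Matrix.transpose_apply, hv]
  rw [htrans, Matrix.det_transpose] at hdvd
  have hdvd2 : (p : ℤ) ∣ (Matrix.vandermonde (fun i : Fin n => (v i : ℤ))).det := by
    rw [hvand, hdesc]
    exact Dvd.dvd.mul_left hdvd _
  rw [Matrix.det_vandermonde] at hdvd2
  have hz : ((∏ i : Fin n, ∏ j ∈ Finset.Ioi i, ((v j : ℤ) - (v i : ℤ)) : ℤ) : ZMod p) = 0 := by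
    exact_mod_cast (ZMod.intCast_zmod_eq_zero_iff_dvd _ p).mpr hdvd2
  rw [Int.cast_prod] at hz
  obtain ⟨i, _, hzero⟩ := Finset.prod_eq_zero_iff.mp hz
  rw [Int.cast_prod] at hzero
  obtain ⟨j, hj, hzero2⟩ := Finset.prod_eq_zero_iff.mp hzero
  have hcast : ∀ k : Fin n, (((v k : ℤ) : ZMod p)) = ξ k := by
    intro k
    rw [Int.cast_natCast, hv]
    exact ZMod.natCast_rightInverse (ξ k)
  rw [Int.cast_sub, hcast, hcast] at hzero2
  have heq : ξ j = ξ i := sub_eq_zero.mp hzero2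
  have hij : j ≠ i := (Finset.mem_Ioi.mp hj).ne'
  exact hij (hξ heq)

lemma card_pairs :
    (Finset.univ.filter (fun q : Fin n × Fin n => q.1 < q.2)).card
      = ∑ j : Fin n, (j : ℕ) := by
  rw [Finset.card_eq_sum_card_fiberwise
    (f := Prod.snd) (t := Finset.univ) (fun q _ => Finset.mem_univ _)]
  refine Finset.sum_congr rfl fun k _ => ?_
  have h : (Finset.univ.filter (fun q : Fin n × Fin n => q.1 < q.2)).filter
        (fun q => q.snd = k)
      = (Finset.Iio k).map ⟨fun i => (i, k), fun a b hab => (Prod.mk.injEq _ _ _ _ ▸ hab).1⟩ := by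
    ext q
    simp only [Finset.mem_filter, Finset.mem_univ, true_and, Finset.mem_map,
      Function.Embedding.coeFn_mk, Finset.mem_Iio]
    constructor
    · rintro ⟨h1, h2⟩
      exact ⟨q.1, h2 ▸ h1, by rw [← h2]; rfl⟩
    · rintro ⟨i, hi, rfl⟩
      exact ⟨hi, rfl⟩
  rw [h, Finset.card_map, Fin.card_Iio]

lemma degree_mu :
    (Finsupp.equivFunOnFinite.symm (fun j : Fin n => (j : ℕ))).degree
      = ∑ j : Fin n, (j : ℕ) := by
  rw [Finsupp.degree_eq_weight_one]
  rw [Finsupp.weight_apply, Finsupp.sum_fintype]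
  · simp
  · intro i; simp

end ChebotarevAux

open ChebotarevAux MvPolynomial in
theorem chebotarev_minors
    (p : ℕ) (hp : p.Prime) (n : ℕ) (hn : 1 ≤ n) (hnp : n ≤ p)
    (x ξ : Fin n → ZMod p)
    (hx : Function.Injective x) (hξ : Function.Injective ξ) :
    Matrix.det (Matrix.of fun j k : Fin n =>
      Complex.exp (2 * Real.pi * Complex.I * ((x j).val * (ξ k).val) / p)) ≠ 0 := by
  haveI : Fact p.Prime := ⟨hp⟩
  haveI : NeZero p := ⟨hp.pos.ne'⟩
  classical
  intro hdet0
  set a : Fin n → ℕ := fun k => (ξ k).val with ha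
  set b : Fin n → ℕ := fun j => (x j).val with hb
  set ζ : ℂ := Complex.exp (2 * Real.pi * Complex.I / p) with hζdef
  have hζ : IsPrimitiveRoot ζ p := Complex.isPrimitiveRoot_exp p hp.pos.ne'
  set g : Fin n → ℂ := fun j => ζ ^ (b j) with hg
  set D : MvPolynomial (Fin n) ℤ :=
    Matrix.det (Matrix.of fun j k : Fin n => (X j : MvPolynomial (Fin n) ℤ) ^ (a k)) with hD
  -- the matrix in the statement is the image of D
  have hmat : (Matrix.of fun j k : Fin n => (X j : MvPolynomial (Fin n) ℤ) ^ (a k)).map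
        (aeval g) = Matrix.of (fun j k : Fin n =>
          Complex.exp (2 * Real.pi * Complex.I * ((x j).val * (ξ k).val) / p)) := by
    ext j k
    rw [Matrix.map_apply, Matrix.of_apply, Matrix.of_apply, map_pow, aeval_X, hg]
    rw [← pow_mul, hζdef, ← Complex.exp_nat_mul]
    congr 1
    rw [hb, ha]
    push_cast
    ring
  have hDg : (aeval g : MvPolynomial (Fin n) ℤ →ₐ[ℤ] ℂ) D = 0 := by
    rw [hD, AlgHom.map_det, AlgHom.mapMatrix_apply, hmat]
    exact hdet0
  set s : Finset (Fin n × Fin n) := Finset.univ.filter (fun q => q.1 < q.2) with hs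
  have hmem_s : ∀ q ∈ s, q.1 < q.2 := fun q hq => (Finset.mem_filter.mp hq).2
  set V : MvPolynomial (Fin n) ℤ := ∏ q ∈ s, (X q.1 - X q.2) with hV
  have hVD : V ∣ D := by
    apply prod_primes_dvd'' s _ D
    · intro q hq; exact prime_X_sub q.1 q.2 (hmem_s q hq).ne
    · intro q hq
      apply dvd_of_subst_eq_zero q.1 q.2
      have hsubD : subst q.1 q.2 D = Matrix.det (Matrix.of fun j k : Fin n =>
          ((if j = q.1 then X q.2 else X j : MvPolynomial (Fin n) ℤ)) ^ (a k)) := by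
        rw [hD, AlgHom.map_det, AlgHom.mapMatrix_apply]
        congr 1
        ext j k
        rw [Matrix.map_apply, Matrix.of_apply, Matrix.of_apply, map_pow]
        congr 1
        by_cases hj : j = q.1
        · subst hj; rw [if_pos rfl, subst_X_self]
        · rw [if_neg hj, subst_X_ne _ _ _ hj]
      rw [hsubD]
      apply Matrix.det_zero_of_row_eq (hmem_s q hq).ne
      funext k
      rw [Matrix.of_apply, Matrix.of_apply, if_pos rfl, if_neg (hmem_s q hq).ne']
    · intro q hq q' hq' hne
      have : (q.1, q.2) ≠ (q'.1, q'.2) := by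
        intro hEq
        apply hne
        exact Prod.ext (congrArg Prod.fst hEq) (congrArg Prod.snd hEq)
      exact not_dvd_pair (hmem_s q hq) (hmem_s q' hq') this
  obtain ⟨Q, hQ⟩ := hVD
  have hbval : ∀ j : Fin n, b j < p := fun j => ZMod.val_lt (x j)
  have hVg : (aeval g : MvPolynomial (Fin n) ℤ →ₐ[ℤ] ℂ) V ≠ 0 := by
    rw [hV, map_prod]
    rw [Finset.prod_ne_zero_iff]
    intro q hq
    rw [map_sub, aeval_X, aeval_X]
    apply sub_ne_zero.mpr
    intro hEq
    have : b q.1 = b q.2 := hζ.pow_inj (hbval q.1) (hbval q.2) hEq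
    have : x q.1 = x q.2 := ZMod.val_injective p this
    exact (hmem_s q hq).ne (hx this)
  have hQg : (aeval g : MvPolynomial (Fin n) ℤ →ₐ[ℤ] ℂ) Q = 0 := by
    rw [hQ, map_mul] at hDg
    rcases mul_eq_zero.mp hDg with h | h
    · exact absurd h hVg
    · exact h
  -- one-variable polynomial
  set qp : Polynomial ℤ :=
    (MvPolynomial.aeval (fun j : Fin n => (Polynomial.X : Polynomial ℤ) ^ (b j))) Q with hqp
  have hqpζ : Polynomial.aeval ζ qp = 0 := by
    have h := MvPolynomial.comp_aeval
      (f := fun j : Fin n => (Polynomial.X : Polynomial ℤ) ^ (b j))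
      (φ := Polynomial.aeval ζ (R := ℤ))
    have h2 := DFunLike.congr_fun h Q
    rw [hqp]
    show (Polynomial.aeval ζ).comp (MvPolynomial.aeval _) Q = 0
    rw [h2]
    have : (fun i : Fin n => Polynomial.aeval ζ ((Polynomial.X : Polynomial ℤ) ^ (b i))) = g := by
      funext i
      rw [map_pow, Polynomial.aeval_X, hg]
    rw [this]
    exact hQg
  have hmin : minpoly ℤ ζ ∣ qp := minpoly.isIntegrallyClosed_dvd (hζ.isIntegral hp.pos) hqpζ
  rw [← Polynomial.cyclotomic_eq_minpoly hζ hp.pos] at hmin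
  obtain ⟨r, hr⟩ := hmin
  have hqp1 : (p : ℤ) ∣ Polynomial.eval 1 qp := by
    rw [hr, Polynomial.eval_mul, Polynomial.eval_one_cyclotomic_prime]
    exact Dvd.intro _ rfl
  have heval1 : Polynomial.eval 1 qp = MvPolynomial.aeval (fun _ : Fin n => (1:ℤ)) Q := by
    have h := MvPolynomial.comp_aeval
      (f := fun j : Fin n => (Polynomial.X : Polynomial ℤ) ^ (b j))
      (φ := Polynomial.aeval (1:ℤ) (R := ℤ))
    have h2 := DFunLike.congr_fun h Q
    rw [← Polynomial.coe_aeval_eq_eval, hqp]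
    show (Polynomial.aeval (1:ℤ)).comp (MvPolynomial.aeval _) Q = _
    rw [h2]
    rw [show (fun i : Fin n => Polynomial.aeval (1:ℤ) ((Polynomial.X : Polynomial ℤ) ^ (b i)))
        = (fun _ : Fin n => (1:ℤ)) from funext fun i => by
      rw [map_pow, Polynomial.aeval_X, one_pow]]
  -- shift
  set shift : MvPolynomial (Fin n) ℤ →ₐ[ℤ] MvPolynomial (Fin n) ℤ :=
    aeval (fun k : Fin n => (X k + 1 : MvPolynomial (Fin n) ℤ)) with hshift
  set RR : MvPolynomial (Fin n) ℤ := shift Q with hRR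
  have hshiftV : shift V = V := by
    rw [hV, map_prod]
    refine Finset.prod_congr rfl fun q _ => ?_
    rw [map_sub, hshift, aeval_X, aeval_X]
    ring
  have hE : Matrix.det (Matrix.of fun j k : Fin n =>
      (X j + 1 : MvPolynomial (Fin n) ℤ) ^ (a k)) = V * RR := by
    have h1 : shift D = Matrix.det (Matrix.of fun j k : Fin n =>
        (X j + 1 : MvPolynomial (Fin n) ℤ) ^ (a k)) := by
      rw [hD, AlgHom.map_det, AlgHom.mapMatrix_apply]
      congr 1
      ext j k
      rw [Matrix.map_apply, Matrix.of_apply, Matrix.of_apply, map_pow, hshift, aeval_X]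
    rw [← h1, hQ, map_mul, hshiftV, hRR]
  have hc0 : (p : ℤ) ∣ MvPolynomial.coeff 0 RR := by
    have hcc : MvPolynomial.coeff 0 RR = MvPolynomial.aeval (fun _ : Fin n => (1:ℤ)) Q := by
      have h := MvPolynomial.comp_aeval
        (f := fun k : Fin n => (X k + 1 : MvPolynomial (Fin n) ℤ))
        (φ := (MvPolynomial.constantCoeff (σ := Fin n) (R := ℤ)).toIntAlgHom)
      have h2 := DFunLike.congr_fun h Q
      have h3 : MvPolynomial.coeff 0 RR
          = (MvPolynomial.constantCoeff (σ := Fin n) (R := ℤ)).toIntAlgHom (shift Q) := by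
        rw [hRR]; rfl
      rw [h3]
      show ((MvPolynomial.constantCoeff).toIntAlgHom.comp shift) Q = _
      rw [hshift]
      refine h2.trans ?_
      rw [show (fun k : Fin n =>
            (MvPolynomial.constantCoeff (σ := Fin n) (R := ℤ)).toIntAlgHom (X k + 1))
          = (fun _ : Fin n => (1:ℤ)) from funext fun k => by
        show MvPolynomial.constantCoeff (X k + 1) = 1
        rw [map_add, constantCoeff_X, map_one, zero_add]]
    rw [hcc, ← heval1]
    exact hqp1
  -- extract coefficient at μ
  set μF : (Fin n) →₀ ℕ := Finsupp.equivFunOnFinite.symm (fun j : Fin n => (j : ℕ)) with hμF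
  have hVhom : V.IsHomogeneous s.card := by
    have h := MvPolynomial.IsHomogeneous.prod s
      (fun q => (X q.1 - X q.2 : MvPolynomial (Fin n) ℤ)) (fun _ => 1)
      (fun q _ => (isHomogeneous_X _ _).sub (isHomogeneous_X _ _))
    simpa [hV] using h
  have hμdeg : μF.degree = s.card := by
    rw [hμF, degree_mu, hs, card_pairs]
  have hkey : MvPolynomial.coeff μF (V * RR)
      = MvPolynomial.coeff μF V * MvPolynomial.coeff 0 RR := by
    rw [MvPolynomial.coeff_mul]
    refine Finset.sum_eq_single_of_mem (μF, 0) ?_ ?_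
    · rw [Finset.HasAntidiagonal.mem_antidiagonal]; exact add_zero μF
    · rintro ⟨ν, τ⟩ hmem hne2
      rw [Finset.HasAntidiagonal.mem_antidiagonal] at hmem
      by_cases hcoeff : MvPolynomial.coeff ν V = 0
      · rw [hcoeff, zero_mul]
      · exfalso
        have hνdeg : ν.degree = s.card := by
          rw [Finsupp.degree_eq_weight_one]
          exact hVhom hcoeff
        have hadd : ν.degree + τ.degree = μF.degree := by
          rw [← hmem]
          simp [Finsupp.degree_eq_weight_one, map_add]
        rw [hνdeg, hμdeg] at hadd
        have hτ0 : τ.degree = 0 := by omega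
        have hτ : τ = 0 := (Finsupp.degree_eq_zero_iff τ).mp hτ0
        subst hτ
        exact hne2 (by rw [← hmem, add_zero])
  have hdetdvd : (p : ℤ) ∣ Matrix.det (Matrix.of fun j k : Fin n =>
      (Nat.choose (a k) (j.val) : ℤ)) := by
    have h := coeff_det_shift a (fun j : Fin n => (j : ℕ))
    rw [← h, ← hμF, hE, hkey]
    exact Dvd.dvd.mul_left hc0 _
  exact det_choose_not_dvd p hp ξ hξ hdetdvd
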